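/- Let b > 1, 0 < η_min ≤ η_max, and let S = {min(η_min b^i, η_max) : i = 0, 1, 2, ...}. Then for any P, V ≥ 0 there exists η ∈ S such that P/η + η V ≤ (b+1)√(PV) + P/η_max + η_min V. -/

import Mathlib

/-- Tuning lemma: on the geometric grid `S = {min(η_min bⁱ, η_max)}` there is a
step-size `η` with `P/η + ηV ≤ (b+1)√(PV) + P/η_max + η_min V`. -/
theorem stmt6 (b ηmin ηmax P V : ℝ) (hb : 1 < b) (h0 : 0 < ηmin) (hle : ηmin ≤ ηmax)
    (hP : 0 ≤ P) (hV : 0 ≤ V) :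
    ∃ i : ℕ, P / min (ηmin * b ^ i) ηmax + min (ηmin * b ^ i) ηmax * V
      ≤ (b + 1) * Real.sqrt (P * V) + P / ηmax + ηmin * V := by
  classical
  have hηmax : 0 < ηmax := h0.trans_le hle
  have hs0 : 0 ≤ Real.sqrt (P * V) := Real.sqrt_nonneg _
  have hb0 : (0:ℝ) < b := lt_trans one_pos hb
  rcases hV.eq_or_lt with hV0 | hV0
  · -- V = 0
    obtain ⟨n, hn⟩ := pow_unbounded_of_one_lt (ηmax / ηmin) hb
    refine ⟨n, ?_⟩
    have hmin : min (ηmin * b ^ n) ηmax = ηmax := min_eq_right (by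
      rw [div_lt_iff₀ h0] at hn; nlinarith)
    rw [hmin, ← hV0]
    nlinarith [Real.sqrt_nonneg (P * 0)]
  · -- V > 0
    set t := Real.sqrt (P / V) with ht
    have hex : ∃ n : ℕ, t ≤ ηmin * b ^ n := by
      obtain ⟨n, hn⟩ := pow_unbounded_of_one_lt (t / ηmin) hb
      rw [div_lt_iff₀ h0] at hn
      exact ⟨n, by nlinarith⟩
    set i := Nat.find hex with hi
    have h1 : t ≤ ηmin * b ^ i := Nat.find_spec hex
    refine ⟨i, ?_⟩
    have hpow : (0:ℝ) < ηmin * b ^ i := by positivity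
    have hpos : 0 < min (ηmin * b ^ i) ηmax := lt_min hpow hηmax
    have htV : t * V = Real.sqrt (P * V) := by
      have h2 : t * V = Real.sqrt ((P / V) * V ^ 2) := by
        rw [ht, Real.sqrt_mul (by positivity : (0:ℝ) ≤ P / V), Real.sqrt_sq hV]
      rw [h2]
      congr 1
      field_simp
    -- Bound 1 : P / η ≤ √(PV) + P/ηmax
    have bound1 : P / min (ηmin * b ^ i) ηmax ≤ Real.sqrt (P * V) + P / ηmax := by
      rcases le_total (ηmin * b ^ i) ηmax with hc | hc
      · rw [min_eq_left hc]
        rcases hP.eq_or_lt with hP0 | hP0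
        · rw [← hP0]
          simp
        · have htpos : 0 < t := Real.sqrt_pos.mpr (div_pos hP0 hV0)
          have hPt : P / t = Real.sqrt (P * V) := by
            rw [eq_comm, eq_div_iff (ne_of_gt htpos), ht,
              ← Real.sqrt_mul (by positivity : (0:ℝ) ≤ P * V)]
            have hPV : P * V * (P / V) = P ^ 2 := by field_simp
            rw [hPV, Real.sqrt_sq hP]
          have : P / (ηmin * b ^ i) ≤ P / t :=
            div_le_div_of_nonneg_left hP htpos h1
          rw [hPt] at this
          have hPmax : 0 ≤ P / ηmax := by positivity
          linarith
      · rw [min_eq_right hc]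
        linarith
    -- Bound 2 : η V ≤ b √(PV) + ηmin V
    have bound2 : min (ηmin * b ^ i) ηmax * V ≤ b * Real.sqrt (P * V) + ηmin * V := by
      rcases Nat.eq_zero_or_pos i with hiz | hipos
      · have : min (ηmin * b ^ i) ηmax ≤ ηmin := by
          rw [hiz]; simpa using min_le_left _ ηmax
        have := mul_le_mul_of_nonneg_right this hV
        nlinarith
      · obtain ⟨k, hk⟩ : ∃ k, i = k + 1 := ⟨i - 1, (Nat.succ_pred_eq_of_pos hipos).symm⟩
        have hlt : ηmin * b ^ k < t := by
          have h := Nat.find_min hex (show k < i by omega)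
          push_neg at h
          exact h
        have hη : min (ηmin * b ^ i) ηmax ≤ b * t := by
          calc min (ηmin * b ^ i) ηmax ≤ ηmin * b ^ i := min_le_left _ _
            _ = b * (ηmin * b ^ k) := by rw [hk, pow_succ]; ring
            _ ≤ b * t := by nlinarith
        have := mul_le_mul_of_nonneg_right hη hV
        rw [mul_assoc, htV] at this
        nlinarith
    linarith
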